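/- Let A be a real n × n matrix and let C ≥ 0 be a real number such that ‖A·w‖_◦ ≤ C·‖w‖_◦ for every vector w ∈ {0,1}^n. Then for every vector v ∈ ℝ^n each of whose entries lies in {0} ∪ [1/2, 1], we have ‖A·v‖_◦ ≤ 2·C·‖v‖_◦. -/

import Mathlib

open MeasureTheory

/-- The `‖·‖_◦` norm: `‖v‖_◦ = ∫₀^∞ √(#{i : |v_i| ≥ x}) dx`. -/
noncomputable def circNorm {n : ℕ} (v : Fin n → ℝ) : ℝ :=
  ∫ x in Set.Ioi (0 : ℝ),
    Real.sqrt ((Finset.univ.filter (fun i : Fin n => x ≤ |v i|)).card : ℝ)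

namespace CircAux

open Finset

noncomputable def W (n k : ℕ) : ℝ := Real.sqrt ((n - k : ℕ)) - Real.sqrt ((n - (k + 1) : ℕ))

lemma sqrt_gap (u : ℝ) (hu : 0 ≤ u) :
    Real.sqrt (u + 1) - Real.sqrt u = 1 / (Real.sqrt (u + 1) + Real.sqrt u) := by
  have h1 : (0:ℝ) < Real.sqrt (u + 1) + Real.sqrt u := by
    have : (0:ℝ) < Real.sqrt (u + 1) := Real.sqrt_pos.2 (by linarith)
    have := Real.sqrt_nonneg u
    linarith
  rw [eq_div_iff h1.ne']
  have h3 : Real.sqrt (u+1) * Real.sqrt (u+1) = u + 1 := Real.mul_self_sqrt (by linarith)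
  have h2 : Real.sqrt u * Real.sqrt u = u := Real.mul_self_sqrt hu
  have : (Real.sqrt (u+1) - Real.sqrt u) * (Real.sqrt (u+1) + Real.sqrt u)
      = Real.sqrt (u+1) * Real.sqrt (u+1) - Real.sqrt u * Real.sqrt u := by ring
  rw [this, h3, h2]; ring

lemma W_nonneg (n k : ℕ) : 0 ≤ W n k := by
  have : (n - (k+1) : ℕ) ≤ (n - k : ℕ) := by omega
  exact sub_nonneg.2 (Real.sqrt_le_sqrt (by exact_mod_cast Nat.cast_le.2 this))

lemma gap_antitone {a b : ℝ} (ha : 0 ≤ a) (hab : a ≤ b) :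
    Real.sqrt (b + 1) - Real.sqrt b ≤ Real.sqrt (a + 1) - Real.sqrt a := by
  rw [sqrt_gap a ha, sqrt_gap b (le_trans ha hab)]
  have h1 : (0:ℝ) < Real.sqrt (a + 1) + Real.sqrt a := by
    have : (0:ℝ) < Real.sqrt (a + 1) := Real.sqrt_pos.2 (by linarith)
    have := Real.sqrt_nonneg a
    linarith
  have h2 : Real.sqrt (a + 1) + Real.sqrt a ≤ Real.sqrt (b + 1) + Real.sqrt b := by
    have := Real.sqrt_le_sqrt (show a + 1 ≤ b + 1 by linarith)
    have := Real.sqrt_le_sqrt hab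
    linarith
  exact one_div_le_one_div_of_le h1 h2

lemma W_mono {n k l : ℕ} (hkl : k ≤ l) (hl : l < n) : W n k ≤ W n l := by
  unfold W
  have e1 : n - k = (n - (k+1)) + 1 := by omega
  have e2 : n - l = (n - (l+1)) + 1 := by omega
  rw [e1, e2]
  push_cast
  exact gap_antitone (by positivity) (by exact_mod_cast Nat.cast_le.2 (by omega : n - (l+1) ≤ n - (k+1)))

lemma sqrt_card_eq {n : ℕ} (g : Fin n → ℝ) (hg : Monotone g) (x : ℝ) :
    Real.sqrt (((univ.filter fun i => x ≤ g i)).card : ℝ)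
      = ∑ i : Fin n, if x ≤ g i then W n i.val else 0 := by
  set S := univ.filter fun i : Fin n => x ≤ g i with hS
  set m := S.card with hm
  have hmn : m ≤ n := by
    have := Finset.card_filter_le (univ : Finset (Fin n)) (fun i => x ≤ g i)
    simpa [hm, hS] using this
  have hA : ∀ i : Fin n, (x ≤ g i) ↔ n - m ≤ i.val := by
    intro i
    constructor
    · intro hi
      have hsub : Finset.Ici i ⊆ S := by
        intro j hj
        rw [Finset.mem_Ici] at hj
        simp only [hS, Finset.mem_filter, Finset.mem_univ, true_and]
        exact le_trans hi (hg hj)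
      have hcard : n - i.val ≤ m := by
        have := Finset.card_le_card hsub
        rwa [Fin.card_Ici] at this
      omega
    · intro hi
      by_contra hx
      have hsub : S ⊆ Finset.Ioi i := by
        intro j hj
        rw [Finset.mem_Ioi]
        by_contra hji
        push_neg at hji
        simp only [hS, Finset.mem_filter, Finset.mem_univ, true_and] at hj
        exact hx (le_trans hj (hg hji))
      have := Finset.card_le_card hsub
      rw [Fin.card_Ioi] at this
      have := i.isLt
      omega
  rw [Finset.sum_congr rfl (fun i _ => if_congr (hA i) rfl rfl)]
  rw [Fin.sum_univ_eq_sum_range (fun k => if n - m ≤ k then W n k else 0) n]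
  rw [← Finset.sum_filter]
  have hfil : (Finset.range n).filter (fun k => n - m ≤ k) = Finset.Ico (n - m) n := by
    ext k; simp only [Finset.mem_filter, Finset.mem_range, Finset.mem_Ico]; omega
  rw [hfil, Finset.sum_Ico_eq_sum_range]
  have hmm : n - (n - m) = m := by omega
  rw [hmm]
  have hterm : ∀ k ∈ Finset.range m, W n (n - m + k)
      = (fun j : ℕ => Real.sqrt ((j+1 : ℕ)) - Real.sqrt ((j : ℕ))) (m - 1 - k) := by
    intro k hk
    rw [Finset.mem_range] at hk
    unfold W
    have e1 : n - (n - m + k) = (m - 1 - k) + 1 := by omega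
    have e2 : n - (n - m + k + 1) = m - 1 - k := by omega
    rw [e1, e2]
  rw [Finset.sum_congr rfl hterm,
    Finset.sum_range_reflect (fun j : ℕ => Real.sqrt ((j+1 : ℕ)) - Real.sqrt ((j : ℕ))) m]
  have := Finset.sum_range_sub (fun j : ℕ => Real.sqrt ((j : ℕ))) m
  rw [this]
  simp

lemma ite_eq_indicator (c WW : ℝ) :
    (fun x : ℝ => if x ≤ c then WW else 0) = (Set.Iic c).indicator (fun _ => WW) := by
  funext x
  simp [Set.indicator_apply, Set.mem_Iic]

lemma integrable_ite (c WW : ℝ) :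
    IntegrableOn (fun x : ℝ => if x ≤ c then WW else 0) (Set.Ioi 0) := by
  rw [ite_eq_indicator]
  unfold IntegrableOn
  rw [integrable_indicator_iff measurableSet_Iic]
  unfold IntegrableOn
  rw [Measure.restrict_restrict measurableSet_Iic]
  refine integrableOn_const (ne_of_lt ?_) enorm_ne_top
  calc volume (Set.Iic c ∩ Set.Ioi 0) ≤ volume (Set.Ioc 0 c) := by
        apply measure_mono
        intro y hy
        exact ⟨hy.2, hy.1⟩
    _ < ⊤ := measure_Ioc_lt_top

lemma integral_ite (c WW : ℝ) (hc : 0 ≤ c) :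
    ∫ x in Set.Ioi (0:ℝ), (if x ≤ c then WW else 0) = WW * c := by
  rw [ite_eq_indicator]
  rw [setIntegral_indicator measurableSet_Iic]
  rw [Set.Ioi_inter_Iic, setIntegral_const, measureReal_def, Real.volume_Ioc]
  rw [smul_eq_mul, mul_comm]
  congr 1
  rw [ENNReal.toReal_ofReal (by linarith)]
  ring

lemma card_filter_perm {n : ℕ} (v : Fin n → ℝ) (σ : Equiv.Perm (Fin n)) (x : ℝ) :
    ((univ.filter fun i : Fin n => x ≤ |v i|)).card
      = ((univ.filter fun i : Fin n => x ≤ |v (σ i)|)).card := by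
  apply Finset.card_bij' (fun i _ => σ⁻¹ i) (fun i _ => σ i)
  · intro i hi
    simp only [Finset.mem_filter, Finset.mem_univ, true_and] at hi ⊢
    simpa using hi
  · intro i hi
    simp only [Finset.mem_filter, Finset.mem_univ, true_and] at hi ⊢
    exact hi
  · intro i _; simp
  · intro i _; simp

lemma rep {n : ℕ} (v : Fin n → ℝ) (σ : Equiv.Perm (Fin n))
    (hg : Monotone fun i => |v (σ i)|) :
    circNorm v = ∑ i : Fin n, W n i.val * |v (σ i)| := by
  have key : circNorm v
      = ∫ x in Set.Ioi (0:ℝ), ∑ i : Fin n, (if x ≤ |v (σ i)| then W n i.val else 0) := by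
    unfold circNorm
    congr 1
    funext x
    rw [card_filter_perm v σ x]
    exact sqrt_card_eq _ hg x
  rw [key, integral_finset_sum _ (fun i _ => integrable_ite _ _)]
  exact Finset.sum_congr rfl fun i _ => integral_ite _ _ (abs_nonneg _)

lemma circNorm_integrableOn {n : ℕ} (v : Fin n → ℝ) :
    IntegrableOn (fun x => Real.sqrt (((univ.filter fun i : Fin n => x ≤ |v i|)).card : ℝ))
      (Set.Ioi (0:ℝ)) := by
  set σ := Tuple.sort (fun i => |v i|) with hσ
  have hg : Monotone fun i => |v (σ i)| := Tuple.monotone_sort (fun i => |v i|)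
  have : (fun x => Real.sqrt (((univ.filter fun i : Fin n => x ≤ |v i|)).card : ℝ))
      = fun x => ∑ i : Fin n, (if x ≤ |v (σ i)| then W n i.val else 0) := by
    funext x
    rw [card_filter_perm v σ x]
    exact sqrt_card_eq _ hg x
  rw [this]
  exact integrable_finset_sum _ (fun i _ => integrable_ite _ _)

lemma circNorm_mono {n : ℕ} (u u' : Fin n → ℝ) (h : ∀ i, |u i| ≤ |u' i|) :
    circNorm u ≤ circNorm u' := by
  unfold circNorm
  apply setIntegral_mono (circNorm_integrableOn u) (circNorm_integrableOn u')
  intro x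
  apply Real.sqrt_le_sqrt
  apply Nat.cast_le.2
  apply Finset.card_le_card
  intro i hi
  simp only [Finset.mem_filter, Finset.mem_univ, true_and] at hi ⊢
  exact le_trans hi (h i)

lemma circNorm_nonneg {n : ℕ} (v : Fin n → ℝ) : 0 ≤ circNorm v :=
  setIntegral_nonneg measurableSet_Ioi fun x _ => Real.sqrt_nonneg _

lemma circNorm_ite {n : ℕ} (P : Fin n → Prop) [DecidablePred P] (a : ℝ) (ha : 0 ≤ a) :
    circNorm (fun i => if P i then a else 0)
      = a * Real.sqrt ((univ.filter P).card : ℝ) := by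
  unfold circNorm
  rw [setIntegral_congr_fun measurableSet_Ioi
    (g := fun x => if x ≤ a then Real.sqrt ((univ.filter P).card : ℝ) else 0) ?_]
  · rw [integral_ite _ _ ha, mul_comm]
  · intro x hx
    rw [Set.mem_Ioi] at hx
    dsimp only
    by_cases hxa : x ≤ a
    · rw [if_pos hxa]
      congr 3
      apply Finset.filter_congr
      intro i _
      constructor
      · intro hle
        by_contra hP
        rw [if_neg hP, abs_zero] at hle
        linarith
      · intro hP
        rw [if_pos hP, abs_of_nonneg ha]
        exact hxa
    · rw [if_neg hxa]
      have : (univ.filter fun i => x ≤ |if P i then a else 0|) = ∅ := by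
        apply Finset.filter_false_of_mem
        intro i _
        push_neg
        by_cases hP : P i
        · rw [if_pos hP, abs_of_nonneg ha]; linarith
        · rw [if_neg hP, abs_zero]; linarith
      rw [this]
      simp
lemma rearr {n : ℕ} (v : Fin n → ℝ) (π : Equiv.Perm (Fin n)) :
    ∑ i : Fin n, W n i.val * |v (π i)| ≤ circNorm v := by
  set τ := Tuple.sort (fun i => |v i|) with hτ
  have hg : Monotone fun i => |v (τ i)| := Tuple.monotone_sort (fun i => |v i|)
  rw [rep v τ hg]
  have hW : Monotone (fun i : Fin n => W n i.val) := fun i j hij => W_mono hij j.isLt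
  have hmv : Monovary (fun i : Fin n => W n i.val) (fun i => |v (τ i)|) := hW.monovary hg
  have hkey := hmv.sum_smul_comp_perm_le_sum_smul (σ := Equiv.trans π τ.symm)
  simpa [smul_eq_mul, Equiv.trans_apply, Equiv.apply_symm_apply] using hkey

lemma circNorm_sum_le {n : ℕ} {ι : Type*} (K : Finset ι) (c : ι → ℝ) (u : ι → Fin n → ℝ)
    (hc : ∀ k ∈ K, 0 ≤ c k) :
    circNorm (fun i => ∑ k ∈ K, c k * u k i) ≤ ∑ k ∈ K, c k * circNorm (u k) := by
  set Sv : Fin n → ℝ := fun i => ∑ k ∈ K, c k * u k i with hSv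
  set τ := Tuple.sort (fun i => |Sv i|) with hτ
  have hg : Monotone fun i => |Sv (τ i)| := Tuple.monotone_sort (fun i => |Sv i|)
  rw [rep Sv τ hg]
  calc ∑ i : Fin n, W n i.val * |Sv (τ i)|
      ≤ ∑ i : Fin n, W n i.val * (∑ k ∈ K, c k * |u k (τ i)|) := by
        apply Finset.sum_le_sum; intro i _
        apply mul_le_mul_of_nonneg_left _ (W_nonneg n i.val)
        calc |Sv (τ i)| ≤ ∑ k ∈ K, |c k * u k (τ i)| := Finset.abs_sum_le_sum_abs _ _
          _ = ∑ k ∈ K, c k * |u k (τ i)| := Finset.sum_congr rfl fun k hk => by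
              rw [abs_mul, abs_of_nonneg (hc k hk)]
    _ = ∑ k ∈ K, c k * ∑ i : Fin n, W n i.val * |u k (τ i)| := by
        simp_rw [Finset.mul_sum]
        rw [Finset.sum_comm]
        exact Finset.sum_congr rfl fun k _ => Finset.sum_congr rfl fun i _ => by ring
    _ ≤ ∑ k ∈ K, c k * circNorm (u k) :=
        Finset.sum_le_sum fun k hk =>
          mul_le_mul_of_nonneg_left (rearr (u k) τ) (hc k hk)
end CircAux

open Finset in
open CircAux in
theorem circNorm_matrix_bound_halfOne {n : ℕ} (A : Matrix (Fin n) (Fin n) ℝ)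
    (C : ℝ) (hC : 0 ≤ C)
    (h : ∀ w : Fin n → ℝ, (∀ i, w i = 0 ∨ w i = 1) →
      circNorm (A.mulVec w) ≤ C * circNorm w) :
    ∀ v : Fin n → ℝ, (∀ i, v i = 0 ∨ (1 / 2 ≤ v i ∧ v i ≤ 1)) →
      circNorm (A.mulVec v) ≤ 2 * C * circNorm v := by
  intro v hv
  rcases Nat.eq_zero_or_pos n with hn | hn
  · subst hn
    have h0 : ∀ u : Fin 0 → ℝ, circNorm u = 0 := by
      intro u
      unfold circNorm
      simp
    rw [h0, h0]
    simp
  -- main case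
  have hvnn : ∀ i, 0 ≤ v i := by
    intro i
    rcases hv i with h0 | ⟨h1, _⟩
    · rw [h0]
    · linarith
  set σ := Tuple.sort v with hσ
  have hg : Monotone (fun j => v (σ j)) := Tuple.monotone_sort v
  set g : Fin n → ℝ := fun j => v (σ j) with hgdef
  have hgnn : ∀ j, 0 ≤ g j := fun j => hvnn _
  have hg1 : ∀ j, g j ≤ 1 := by
    intro j
    rcases hv (σ j) with h0 | ⟨_, h1⟩
    · rw [hgdef]; dsimp only; rw [h0]; norm_num
    · exact h1
  set E : ℕ → ℝ := fun k => if hk : k - 1 < n ∧ k ≠ 0 then g ⟨k - 1, hk.1⟩ else 0 with hE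
  have hE0 : E 0 = 0 := by simp [hE]
  have hEsucc : ∀ k (hk : k < n), E (k + 1) = g ⟨k, hk⟩ := by
    intro k hk
    rw [hE]
    dsimp only
    rw [dif_pos (show (k + 1) - 1 < n ∧ (k + 1) ≠ 0 by omega)]
    exact congrArg g (Fin.ext (by simp))
  have hEnn : ∀ k, 0 ≤ E k := by
    intro k
    rw [hE]; dsimp only
    split
    · exact hgnn _
    · exact le_rfl
  set c : Fin n → ℝ := fun j => E (j.val + 1) - E j.val with hc
  set w : Fin n → Fin n → ℝ := fun j i => if g j ≤ v i then 1 else 0 with hw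
  have hEj : ∀ j : Fin n, E (j.val + 1) = g j := by
    intro j
    rw [hEsucc j.val j.isLt]
  have hcnn : ∀ j, 0 ≤ c j := by
    intro j
    rw [hc]; dsimp only
    rcases Nat.eq_zero_or_pos j.val with h0 | h0
    · rw [h0, hE0, sub_zero]; exact hEnn _
    · have h1 : E j.val = g ⟨j.val - 1, by omega⟩ := by
        have h2 := hEsucc (j.val - 1) (by omega)
        rwa [show j.val - 1 + 1 = j.val by omega] at h2
      rw [h1, hEj j]
      have : (⟨j.val - 1, by omega⟩ : Fin n) ≤ j := by
        rw [Fin.le_def]; dsimp only; omega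
      exact sub_nonneg.2 (hg this)
  have hsumc : ∑ j : Fin n, c j ≤ 1 := by
    have heq : ∑ j : Fin n, c j = E n - E 0 := by
      rw [show (∑ j : Fin n, c j) = ∑ j : Fin n, (fun k => E (k + 1) - E k) j.val from rfl]
      rw [Fin.sum_univ_eq_sum_range (fun k => E (k + 1) - E k) n]
      exact Finset.sum_range_sub E n
    rw [heq, hE0, sub_zero]
    have h2 := hEsucc (n - 1) (by omega)
    rw [show n - 1 + 1 = n by omega] at h2
    rw [h2]
    exact hg1 _
  -- decomposition
  have hdecomp : ∀ i, v i = ∑ j : Fin n, c j * w j i := by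
    intro i
    have hgv : g (σ.symm i) = v i := by
      rw [hgdef]; dsimp only; rw [Equiv.apply_symm_apply]
    set P := univ.filter (fun j : Fin n => g j ≤ v i) with hP
    have hne : P.Nonempty := ⟨σ.symm i, by simp [hP, hgv]⟩
    set j0 := P.max' hne with hj0
    have hj0m : j0 ∈ P := P.max'_mem hne
    have hj0le : g j0 ≤ v i := by
      rw [hP] at hj0m
      simpa using hj0m
    have hiff : ∀ j : Fin n, (g j ≤ v i) ↔ j ≤ j0 := by
      intro j
      constructor
      · intro hj
        exact P.le_max' j (by simp [hP, hj])
      · intro hj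
        exact le_trans (hg hj) hj0le
    have hval : g j0 = v i := by
      have h3 : v i ≤ g j0 := by
        rw [← hgv]
        exact hg ((hiff (σ.symm i)).1 (le_of_eq hgv))
      linarith
    have hrhs : ∑ j : Fin n, c j * w j i
        = ∑ k ∈ Finset.range (j0.val + 1), (E (k + 1) - E k) := by
      have step1 : ∑ j : Fin n, c j * w j i
          = ∑ j : Fin n, (if j.val ≤ j0.val then (fun k => E (k + 1) - E k) j.val else 0) := by
        apply Finset.sum_congr rfl
        intro j _
        rw [hw]; dsimp only
        by_cases hj : g j ≤ v i
        · rw [if_pos hj, if_pos (Fin.le_def.1 ((hiff j).1 hj)), mul_one]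
        · rw [if_neg hj, mul_zero, if_neg]
          intro hle
          exact hj ((hiff j).2 (Fin.le_def.2 hle))
      rw [step1]
      rw [Fin.sum_univ_eq_sum_range
        (fun k => if k ≤ j0.val then E (k + 1) - E k else 0) n]
      rw [← Finset.sum_filter]
      congr 1
      ext k
      simp only [Finset.mem_filter, Finset.mem_range]
      have := j0.isLt
      omega
    rw [hrhs, Finset.sum_range_sub E, hE0, sub_zero,
      show E (j0.val + 1) = g j0 from hEj j0, hval]
  -- linearity of mulVec
  have hAv : A.mulVec v = fun i => ∑ j : Fin n, c j * (A.mulVec (w j)) i := by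
    funext i
    show ∑ p : Fin n, A i p * v p = _
    calc ∑ p : Fin n, A i p * v p
        = ∑ p : Fin n, A i p * ∑ j : Fin n, c j * w j p := by
          exact Finset.sum_congr rfl fun p _ => by rw [← hdecomp p]
      _ = ∑ p : Fin n, ∑ j : Fin n, c j * (A i p * w j p) := by
          apply Finset.sum_congr rfl
          intro p _
          rw [Finset.mul_sum]
          exact Finset.sum_congr rfl fun j _ => by ring
      _ = ∑ j : Fin n, ∑ p : Fin n, c j * (A i p * w j p) := Finset.sum_comm
      _ = ∑ j : Fin n, c j * (A.mulVec (w j)) i := by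
          apply Finset.sum_congr rfl
          intro j _
          rw [← Finset.mul_sum]
          rfl
  -- set S := support of v
  set S := univ.filter (fun i : Fin n => v i ≠ 0) with hSdef
  have hS2 : Real.sqrt (S.card : ℝ) ≤ 2 * circNorm v := by
    have hmono := circNorm_mono (fun i => if v i ≠ 0 then (2⁻¹ : ℝ) else 0) v ?_
    · rw [circNorm_ite (fun i => v i ≠ 0) (2⁻¹ : ℝ) (by norm_num)] at hmono
      rw [← hSdef] at hmono
      linarith
    · intro i
      by_cases hi : v i ≠ 0
      · rw [if_pos hi, abs_of_nonneg (by norm_num : (0:ℝ) ≤ (2⁻¹:ℝ)), abs_of_nonneg (hvnn i)]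
        rcases hv i with h0 | ⟨h1, _⟩
        · exact absurd h0 hi
        · linarith
      · rw [if_neg hi, abs_zero]
        exact abs_nonneg _
  -- per-j bound
  have hperj : ∀ j : Fin n, c j * circNorm (A.mulVec (w j))
      ≤ c j * (C * (2 * circNorm v)) := by
    intro j
    rcases eq_or_lt_of_le (hcnn j) with h0 | h0
    · rw [← h0, zero_mul, zero_mul]
    have hgj : 0 < g j := by
      have h1 : c j = g j - E j.val := by rw [hc]; dsimp only; rw [hEj j]
      have h2 := hEnn j.val
      rw [hc] at h0
      dsimp only at h0
      rw [hEj j] at h0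
      linarith
    apply mul_le_mul_of_nonneg_left _ (hcnn j)
    have h01 : ∀ i, w j i = 0 ∨ w j i = 1 := by
      intro i
      rw [hw]; dsimp only
      by_cases hi : g j ≤ v i
      · right; rw [if_pos hi]
      · left; rw [if_neg hi]
    have hstep1 : circNorm (A.mulVec (w j)) ≤ C * circNorm (w j) := h (w j) h01
    have hwj : circNorm (w j) = Real.sqrt (((univ.filter fun i => g j ≤ v i)).card : ℝ) := by
      have := circNorm_ite (fun i => g j ≤ v i) (1 : ℝ) (by norm_num)
      rw [one_mul] at this
      rw [← this]
    have hsub : ((univ.filter fun i : Fin n => g j ≤ v i)).card ≤ S.card := by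
      apply Finset.card_le_card
      intro i hi
      simp only [Finset.mem_filter, Finset.mem_univ, true_and] at hi ⊢
      rw [hSdef]
      simp only [Finset.mem_filter, Finset.mem_univ, true_and]
      intro h0'
      rw [h0'] at hi
      linarith
    have hstep2 : circNorm (w j) ≤ 2 * circNorm v := by
      rw [hwj]
      exact le_trans (Real.sqrt_le_sqrt (Nat.cast_le.2 hsub)) hS2
    calc circNorm (A.mulVec (w j)) ≤ C * circNorm (w j) := hstep1
      _ ≤ C * (2 * circNorm v) := mul_le_mul_of_nonneg_left hstep2 hC
  -- assemble
  calc circNorm (A.mulVec v)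
      = circNorm (fun i => ∑ j ∈ univ, c j * (A.mulVec (w j)) i) := by rw [hAv]
    _ ≤ ∑ j : Fin n, c j * circNorm (A.mulVec (w j)) :=
        circNorm_sum_le univ c (fun j => A.mulVec (w j)) (fun j _ => hcnn j)
    _ ≤ ∑ j : Fin n, c j * (C * (2 * circNorm v)) := Finset.sum_le_sum fun j _ => hperj j
    _ = (∑ j : Fin n, c j) * (C * (2 * circNorm v)) := by rw [← Finset.sum_mul]
    _ ≤ 1 * (C * (2 * circNorm v)) := by
        apply mul_le_mul_of_nonneg_right hsumc
        have := circNorm_nonneg v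
        positivity
    _ = 2 * C * circNorm v := by ring
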